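/- The lowest-order function edge mode φ̂_{0,0}(x̂,ŷ) = (ŷ(ŷ²−1)(3x̂²−5)/32, −x̂(x̂²−1)(3ŷ²−5)/32 − (x̂−1)/4) satisfies: (i) its second component equals 1/2 at x̂ = −1 for all ŷ, and vanishes at x̂ = 1 for all ŷ; (ii) its first component vanishes whenever ŷ = −1 or ŷ = 1; (iii) its scalar curl satisfies ∇×φ̂_{0,0}(x̂,ŷ) = −(9/16)(x̂²−1)(ŷ²−1), and in particular ∇×φ̂_{0,0} vanishes whenever x̂ ∈ {−1,1} or ŷ ∈ {−1,1}. Hence φ̂_{0,0} has nonzero tangential trace only on the edge x̂ = −1 of [−1,1]² and vanishing curl trace on all four edges. -/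

import Mathlib

/-- Scalar curl of a planar vector field: `∇×u = ∂u₂/∂x̂ − ∂u₁/∂ŷ`. -/
noncomputable def scurl (u : ℝ × ℝ → ℝ × ℝ) (z : ℝ × ℝ) : ℝ :=
  deriv (fun t => (u (t, z.2)).2) z.1 - deriv (fun t => (u (z.1, t)).1) z.2

/-- Lowest-order function edge mode `φ̂_{0,0}`. -/
noncomputable def phi00 (z : ℝ × ℝ) : ℝ × ℝ :=
  (z.2 * (z.2 ^ 2 - 1) * (3 * z.1 ^ 2 - 5) / 32,
   -(z.1 * (z.1 ^ 2 - 1) * (3 * z.2 ^ 2 - 5)) / 32 - (z.1 - 1) / 4)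

/-- Trace properties of `φ̂_{0,0}`: (i) second component equals `1/2` at `x̂ = −1` and `0` at
`x̂ = 1`; (ii) first component vanishes at `ŷ = ±1`;
(iii) `∇×φ̂_{0,0} = −(9/16)(x̂²−1)(ŷ²−1)`, which vanishes on all four edges of `[−1,1]²`. -/
theorem phi00_traces :
    (∀ yh : ℝ, (phi00 (-1, yh)).2 = 1 / 2 ∧ (phi00 (1, yh)).2 = 0) ∧
    (∀ xh : ℝ, (phi00 (xh, -1)).1 = 0 ∧ (phi00 (xh, 1)).1 = 0) ∧
    (∀ z : ℝ × ℝ, scurl phi00 z = -(9 / 16) * (z.1 ^ 2 - 1) * (z.2 ^ 2 - 1)) ∧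
    (∀ z : ℝ × ℝ, (z.1 = -1 ∨ z.1 = 1 ∨ z.2 = -1 ∨ z.2 = 1) → scurl phi00 z = 0) := by
  have hcurl : ∀ z : ℝ × ℝ, scurl phi00 z = -(9 / 16) * (z.1 ^ 2 - 1) * (z.2 ^ 2 - 1) := by
    intro z
    obtain ⟨x, y⟩ := z
    have h1 : deriv (fun t : ℝ => (phi00 (t, y)).2) x
        = -(3 * x ^ 2 - 1) * (3 * y ^ 2 - 5) / 32 - 1 / 4 := by
      have : (fun t : ℝ => (phi00 (t, y)).2)
          = fun t : ℝ => -(t * (t ^ 2 - 1) * (3 * y ^ 2 - 5)) / 32 - (t - 1) / 4 := rfl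
      rw [this]
      have hd : HasDerivAt (fun t : ℝ => -(t * (t ^ 2 - 1) * (3 * y ^ 2 - 5)) / 32 - (t - 1) / 4)
          (-(3 * x ^ 2 - 1) * (3 * y ^ 2 - 5) / 32 - 1 / 4) x := by
        have := ((hasDerivAt_id x).mul ((hasDerivAt_pow 2 x).sub_const 1)).mul_const (3 * y ^ 2 - 5)
        have h2 := ((this.neg.div_const 32).sub (((hasDerivAt_id x).sub_const 1).div_const 4))
        refine h2.congr_deriv ?_
        simp only [id_eq]
        ring
      exact hd.deriv
    have h2 : deriv (fun t : ℝ => (phi00 (x, t)).1) y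
        = (3 * y ^ 2 - 1) * (3 * x ^ 2 - 5) / 32 := by
      have : (fun t : ℝ => (phi00 (x, t)).1)
          = fun t : ℝ => t * (t ^ 2 - 1) * (3 * x ^ 2 - 5) / 32 := rfl
      rw [this]
      have hd : HasDerivAt (fun t : ℝ => t * (t ^ 2 - 1) * (3 * x ^ 2 - 5) / 32)
          ((3 * y ^ 2 - 1) * (3 * x ^ 2 - 5) / 32) y := by
        have := (((hasDerivAt_id y).mul ((hasDerivAt_pow 2 y).sub_const 1)).mul_const
          (3 * x ^ 2 - 5)).div_const 32
        refine this.congr_deriv ?_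
        simp only [id_eq]
        ring
      exact hd.deriv
    simp only [scurl, h1, h2]
    ring
  refine ⟨fun yh => by constructor <;> simp [phi00] <;> ring,
    fun xh => by constructor <;> simp [phi00] <;> ring, hcurl, ?_⟩
  intro z hz
  rw [hcurl z]
  rcases hz with h | h | h | h <;> rw [h] <;> ring
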